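/- For all real x > -1/2, ψ(x+1) − ψ(x+1/2) = 1/p + 2·Σ_{m=1}^∞ 2^{-1-m}·m!/p^{(m+1)} where p = 2x+1. -/

import Mathlib

noncomputable def psi (x : ℝ) : ℝ := deriv Real.Gamma x / Real.Gamma x

open Real Filter Topology

namespace DigammaAux

noncomputable def P (p : ℝ) (k : ℕ) : ℝ := ∏ j ∈ Finset.range k, (p + j)

lemma P_pos {p : ℝ} (hp : 0 < p) (k : ℕ) : 0 < P p k :=
  Finset.prod_pos (fun j _ => by positivity)

lemma P_succ (p : ℝ) (k : ℕ) : P p (k+1) = P p k * (p + k) := Finset.prod_range_succ _ _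

lemma P_shift (p : ℝ) (k : ℕ) : P p (k+1) = P (p+1) k * p := by
  rw [P, Finset.prod_range_succ']
  simp only [Nat.cast_zero, add_zero]
  congr 1
  apply Finset.prod_congr rfl
  intro j _
  push_cast; ring

lemma P_ge {p : ℝ} (hp : 0 < p) (k : ℕ) : p * (k.factorial : ℝ) ≤ P p (k+1) := by
  rw [P_shift]
  rw [mul_comm]
  apply mul_le_mul_of_nonneg_right _ hp.le
  rw [P]
  calc (k.factorial : ℝ) = ∏ j ∈ Finset.range k, ((j : ℝ) + 1) := by
        rw [← Finset.prod_range_add_one_eq_factorial]; push_cast; rfl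
    _ ≤ ∏ j ∈ Finset.range k, (p + 1 + j) := by
        apply Finset.prod_le_prod (fun j _ => by positivity) (fun j _ => by push_cast; linarith)

end DigammaAux

namespace DigammaAux

noncomputable def term (p : ℝ) (n : ℕ) : ℝ :=
  (1 / 2 ^ (n + 2)) * ((n + 1).factorial : ℝ) / P p (n + 2)

noncomputable def T (p : ℝ) (m : ℕ) : ℝ := (1 / 2 ^ m) * (m.factorial : ℝ) / P p (m + 1)

lemma term_eq (p : ℝ) (n : ℕ) : term p n = T p (n + 1) / 2 := by
  simp only [term, T]
  ring_nf

lemma T_nonneg {p : ℝ} (hp : 0 < p) (m : ℕ) : 0 ≤ T p m := by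
  have := P_pos hp (m + 1)
  unfold T; positivity

lemma T_le {p : ℝ} (hp : 0 < p) (m : ℕ) : T p m ≤ (1 / p) * (1 / 2) ^ m := by
  have h1 := P_ge hp m
  have h2 := P_pos hp (m + 1)
  have h3 : (0:ℝ) < (m.factorial : ℝ) := by exact_mod_cast m.factorial_pos
  rw [T, div_le_iff₀ h2]
  have key : (1:ℝ) / 2 ^ m * (m.factorial : ℝ) = 1 / p * (1 / 2) ^ m * (p * m.factorial) := by
    field_simp
    ring_nf; rw [← mul_pow]; norm_num
  rw [key]
  exact mul_le_mul_of_nonneg_left h1 (by positivity)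

lemma summable_T {p : ℝ} (hp : 0 < p) : Summable (T p) := by
  apply Summable.of_nonneg_of_le (T_nonneg hp) (T_le hp)
  exact (summable_geometric_of_lt_one (by norm_num) (by norm_num)).mul_left _

lemma summable_term {p : ℝ} (hp : 0 < p) : Summable (term p) := by
  have h : Summable (fun n => T p (n + 1)) :=
    (summable_T hp).comp_injective (add_left_injective 1)
  exact (h.div_const 2).congr (fun n => (term_eq p n).symm)

end DigammaAux

namespace DigammaAux

lemma telescope {p : ℝ} (hp : 0 < p) (n : ℕ) :
    term p n + term (p + 1) n = T p (n + 1) - T p (n + 2) := by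
  have hA : 0 < P p (n + 2) := P_pos hp _
  have h3 : P p (n + 3) = P p (n + 2) * (p + ((n:ℝ) + 2)) := by
    have := P_succ p (n + 2); rw [this]; push_cast; ring
  have hsh : P p (n + 3) = P (p + 1) (n + 2) * p := P_shift p (n + 2)
  have hB : P (p + 1) (n + 2) = P p (n + 2) * (p + ((n:ℝ) + 2)) / p := by
    rw [← h3, hsh]; field_simp
  have hfac : (((n + 2).factorial : ℝ)) = ((n:ℝ) + 2) * ((n + 1).factorial : ℝ) := by
    rw [show n + 2 = (n + 1) + 1 from rfl, Nat.factorial_succ]; push_cast; ring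
  have hpn : (0:ℝ) < p + ((n:ℝ) + 2) := by positivity
  simp only [term, T, hB, hfac]
  rw [show n + 1 + 1 = n + 2 from rfl, show n + 2 + 1 = n + 3 from rfl, h3]
  field_simp
  ring

lemma tsum_telescope {p : ℝ} (hp : 0 < p) :
    ∑' n : ℕ, (T p (n + 1) - T p (n + 2)) = T p 1 := by
  have h1 : Summable (fun n : ℕ => T p (n + 1)) :=
    (summable_T hp).comp_injective (add_left_injective 1)
  have h2 : Summable (fun n : ℕ => T p (n + 2)) :=
    (summable_T hp).comp_injective (add_left_injective 2)
  rw [h1.tsum_sub h2]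
  have h0 := h1.tsum_eq_zero_add
  simp only [zero_add] at h0
  rw [h0]
  simp only [show ∀ b : ℕ, b + 1 + 1 = b + 2 from fun b => rfl]
  ring

noncomputable def g (p : ℝ) : ℝ := 1 / p + 2 * ∑' n : ℕ, term p n

lemma g_rec {p : ℝ} (hp : 0 < p) : g p + g (p + 1) = 2 / p := by
  have hp1 : (0:ℝ) < p + 1 := by linarith
  have hsum : (∑' n : ℕ, term p n) + ∑' n : ℕ, term (p + 1) n = T p 1 := by
    rw [← Summable.tsum_add (summable_term hp) (summable_term hp1)]
    rw [tsum_congr (telescope hp), tsum_telescope hp]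
  have hT1 : T p 1 = 1 / (2 * (p * (p + 1))) := by
    have hP2 : P p 2 = p * (p + 1) := by
      simp [P, Finset.prod_range_succ]
    simp only [T, hP2, Nat.factorial]
    rw [pow_one]
    push_cast
    field_simp
  have := hsum
  rw [hT1] at this
  simp only [g]
  have hne : p ≠ 0 := hp.ne'
  have hne1 : p + 1 ≠ 0 := hp1.ne'
  have : 2 * (∑' n : ℕ, term p n) + 2 * ∑' n : ℕ, term (p + 1) n = 1 / (p * (p + 1)) := by
    rw [← mul_add, this]; field_simp
  rw [show 1 / p + 2 * (∑' n : ℕ, term p n) + (1 / (p + 1) + 2 * ∑' n : ℕ, term (p + 1) n)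
      = 1 / p + 1 / (p + 1) + (2 * (∑' n : ℕ, term p n) + 2 * ∑' n : ℕ, term (p + 1) n) by ring,
    this]
  field_simp
  ring

lemma term_nonneg {p : ℝ} (hp : 0 < p) (n : ℕ) : 0 ≤ term p n := by
  have := P_pos hp (n + 2)
  unfold term; positivity

lemma g_nonneg {p : ℝ} (hp : 0 < p) : 0 ≤ g p := by
  have h := tsum_nonneg (L := SummationFilter.unconditional ℕ) (term_nonneg hp)
  have : 0 ≤ 1 / p := by positivity
  unfold g; linarith

lemma g_le {p : ℝ} (hp : 0 < p) : g p ≤ 2 / p := by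
  have hle : (∑' n : ℕ, term p n) ≤ ∑' n : ℕ, (1 / (4 * p)) * (1 / 2) ^ n := by
    apply Summable.tsum_le_tsum _ (summable_term hp)
      ((summable_geometric_of_lt_one (by norm_num) (by norm_num)).mul_left _)
    intro n
    rw [term_eq]
    have := T_le hp (n + 1)
    calc T p (n + 1) / 2 ≤ ((1 / p) * (1 / 2) ^ (n + 1)) / 2 := by linarith
      _ = (1 / (4 * p)) * (1 / 2) ^ n := by rw [pow_succ]; ring
  have hgeo : ∑' n : ℕ, (1 / (4 * p)) * ((1:ℝ) / 2) ^ n = 1 / (2 * p) := by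
    rw [tsum_mul_left, tsum_geometric_of_lt_one (by norm_num) (by norm_num)]
    norm_num
    ring
  rw [hgeo] at hle
  have : 2 * (∑' n : ℕ, term p n) ≤ 2 * (1 / (2 * p)) := by linarith
  have h2 : 2 * (1 / (2 * p)) = 1 / p := by field_simp
  unfold g
  rw [h2] at this
  have : (1:ℝ)/p + 1/p = 2/p := by ring
  linarith [hle, ‹2 * (∑' n : ℕ, term p n) ≤ 1/p›]

end DigammaAux

namespace DigammaAux

lemma diffGamma {y : ℝ} (hy : 0 < y) : DifferentiableAt ℝ Real.Gamma y :=
  Real.differentiableAt_Gamma (fun m => ne_of_gt (by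
    have : (0:ℝ) ≤ m := m.cast_nonneg
    linarith))

lemma psi_rec {y : ℝ} (hy : 0 < y) : psi (y + 1) = psi y + 1 / y := by
  have hy1 : (0:ℝ) < y + 1 := by linarith
  have hG := diffGamma hy
  have hd : HasDerivAt Real.Gamma (deriv Real.Gamma y) y := hG.hasDerivAt
  have h1 : HasDerivAt (fun t => Real.Gamma (t + 1)) (deriv Real.Gamma (y + 1)) y :=
    HasDerivAt.comp_add_const y 1 (diffGamma hy1).hasDerivAt
  have h2 : HasDerivAt (fun t => t * Real.Gamma t)
      (1 * Real.Gamma y + y * deriv Real.Gamma y) y := (hasDerivAt_id y).mul hd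
  have heq : (fun t => t * Real.Gamma t) =ᶠ[nhds y] (fun t => Real.Gamma (t + 1)) := by
    filter_upwards [eventually_ne_nhds hy.ne'] with t ht
    rw [Real.Gamma_add_one ht]
  have h1' : HasDerivAt (fun t => Real.Gamma (t + 1))
      (1 * Real.Gamma y + y * deriv Real.Gamma y) y := h2.congr_of_eventuallyEq heq.symm
  have hkey : deriv Real.Gamma (y + 1) = Real.Gamma y + y * deriv Real.Gamma y := by
    have := h1.unique h1'
    linarith [this]
  have hGpos := Real.Gamma_pos_of_pos hy
  simp only [psi, hkey, Real.Gamma_add_one hy.ne']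
  field_simp
  ring

lemma psi_eq_deriv_log {y : ℝ} (hy : 0 < y) :
    psi y = deriv (Real.log ∘ Real.Gamma) y := by
  rw [Function.comp_def, deriv.log (diffGamma hy) (Real.Gamma_pos_of_pos hy).ne']
  rfl

lemma psi_mono {a b : ℝ} (ha : 0 < a) (hab : a ≤ b) : psi a ≤ psi b := by
  have hb : 0 < b := lt_of_lt_of_le ha hab
  have hmono := Real.convexOn_log_Gamma.monotoneOn_deriv (fun x hx => by
    have hx' : (0:ℝ) < x := hx
    exact ((diffGamma hx').log (Real.Gamma_pos_of_pos hx').ne').congr_of_eventuallyEq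
      (Filter.Eventually.of_forall fun t => rfl))
  rw [psi_eq_deriv_log ha, psi_eq_deriv_log hb]
  exact hmono (Set.mem_Ioi.mpr ha) (Set.mem_Ioi.mpr hb) hab

end DigammaAux

namespace DigammaAux

noncomputable def F (x : ℝ) : ℝ := psi (x + 1) - psi (x + 1/2)

lemma F_rec {x : ℝ} (hx : x > -1/2) : F (x + 1/2) = 2 / (2*x+1) - F x := by
  have h0 : (0:ℝ) < x + 1/2 := by linarith
  have h1 := psi_rec h0
  have e1 : x + 1/2 + 1 = (x + 1/2) + 1 := by ring
  have e2 : x + 1/2 + 1/2 = x + 1 := by ring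
  simp only [F, e2]
  rw [h1]
  have : 1 / (x + 1/2) = 2 / (2*x+1) := by
    rw [div_eq_div_iff (by linarith) (by linarith)]; ring
  rw [this]; ring

lemma h_rec {x : ℝ} (hx : x > -1/2) :
    F (x + 1/2) - g (2*(x+1/2)+1) = -(F x - g (2*x+1)) := by
  have hp : (0:ℝ) < 2*x+1 := by linarith
  have := g_rec hp
  have e : 2*(x+1/2)+1 = (2*x+1) + 1 := by ring
  rw [F_rec hx, e]
  linarith

lemma F_bounds {y : ℝ} (hy : 0 < y) : 0 ≤ F y ∧ F y ≤ 1 / y := by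
  have h1 : psi (y + 1/2) ≤ psi (y + 1) := psi_mono (by linarith) (by linarith)
  have h2 : psi y ≤ psi (y + 1/2) := psi_mono hy (by linarith)
  have h3 := psi_rec hy
  constructor
  · simp only [F]; linarith
  · simp only [F]; linarith

lemma h_eq_zero {x : ℝ} (hx : x > -1/2) : F x = g (2*x+1) := by
  have key : ∀ n : ℕ, F (x + n/2) - g (2*(x + n/2)+1) = (-1)^n * (F x - g (2*x+1)) := by
    intro n
    induction n with
    | zero => simp
    | succ n ih =>
      have hx' : x + n/2 > -1/2 := by
        have : (0:ℝ) ≤ (n:ℝ)/2 := by positivity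
        linarith
      have e : x + (n+1:ℕ)/2 = (x + n/2) + 1/2 := by push_cast; ring
      rw [e, h_rec hx', ih]
      ring
  have htop : Filter.Tendsto (fun n : ℕ => x + (n:ℝ)/2) atTop atTop := by
    apply Filter.tendsto_atTop_add_const_left
    exact Filter.Tendsto.atTop_div_const (by norm_num) tendsto_natCast_atTop_atTop
  have hb : Filter.Tendsto (fun n : ℕ => 1/(x + (n:ℝ)/2) + 2/(2*(x + (n:ℝ)/2)+1))
      atTop (nhds 0) := by
    have t1 : Filter.Tendsto (fun n : ℕ => 1/(x + (n:ℝ)/2)) atTop (nhds 0) := by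
      simp only [one_div]
      exact htop.inv_tendsto_atTop
    have t2 : Filter.Tendsto (fun n : ℕ => 2/(2*(x + (n:ℝ)/2)+1)) atTop (nhds 0) := by
      have h2 : Filter.Tendsto (fun n : ℕ => (2*(x + (n:ℝ)/2)+1)) atTop atTop := by
        apply Filter.tendsto_atTop_add_const_right
        exact htop.const_mul_atTop (by norm_num)
      simpa using Filter.Tendsto.div_atTop (tendsto_const_nhds (x := (2:ℝ))) h2
    simpa using t1.add t2
  have hzero : Filter.Tendsto (fun n : ℕ => F (x + (n:ℝ)/2) - g (2*(x + (n:ℝ)/2)+1))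
      atTop (nhds 0) := by
    apply squeeze_zero_norm' _ hb
    filter_upwards [htop.eventually_gt_atTop 0] with n hn
    set y := x + (n:ℝ)/2
    have hFb := F_bounds hn
    have hp : (0:ℝ) < 2*y+1 := by linarith
    have hg0 := g_nonneg hp
    have hg1 := g_le hp
    rw [Real.norm_eq_abs, abs_sub_le_iff]
    constructor
    · have : (0:ℝ) ≤ 2/(2*y+1) := by positivity
      linarith [hFb.2]
    · have : (0:ℝ) ≤ 1/y := by positivity
      linarith [hFb.1]
  have habs : Filter.Tendsto (fun n : ℕ => |F x - g (2*x+1)|) atTop (nhds 0) := by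
    have := hzero.abs
    simp only [abs_zero] at this
    apply this.congr
    intro n
    rw [key n, abs_mul, abs_pow, abs_neg, abs_one, one_pow, one_mul]
  have : |F x - g (2*x+1)| = 0 :=
    tendsto_nhds_unique tendsto_const_nhds habs
  have := abs_eq_zero.mp this
  linarith [this]

end DigammaAux

theorem digamma_diff_eq_series (x : ℝ) (hx : x > -1/2) :
    psi (x + 1) - psi (x + 1/2) =
      1 / (2 * x + 1) +
        2 * ∑' n : ℕ, (1 / 2 ^ (n + 2)) * ((n + 1).factorial : ℝ) /
          ∏ j ∈ Finset.range (n + 2), (2 * x + 1 + j) := by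
  have := DigammaAux.h_eq_zero hx
  simp only [DigammaAux.F, DigammaAux.g, DigammaAux.term, DigammaAux.P] at this
  exact this
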